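/- Let n ≥ 1 be an integer, 0 < R₂ < R₁, p > 2 a real number, and let f⁺ : [R₂,R₁] → ℝ be continuous with f⁺(r) > 0 for all r ∈ [R₂,R₁]. For t ∈ ℝ and ρ ∈ [R₂,R₁] define F(ρ,t) := (t·R₂ⁿ − ∫_{R₂}^ρ f⁺(r)r^{n−1} dr)/ρⁿ, and define M_p(t) := ∫_{R₂}^{R₁} sgn(F(ρ,t))·|F(ρ,t)·ρ|^{1/(p−1)} dρ. Then M_p : ℝ → ℝ is continuous and strictly increasing. -/
import Mathlib

private lemma phi_continuous {a : ℝ} (ha : 0 < a) :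
    Continuous fun s : ℝ => Real.sign s * |s| ^ a := by
  have habs : Continuous fun x : ℝ => |x| ^ a :=
    continuous_abs.rpow_const fun x => Or.inr ha.le
  rw [continuous_iff_continuousAt]
  intro s
  rcases lt_trichotomy s 0 with hs | hs | hs
  · have hev : ∀ᶠ x in nhds s, -(|x| ^ a) = Real.sign x * |x| ^ a := by
      filter_upwards [gt_mem_nhds hs] with x hx
      rw [Real.sign_of_neg hx, neg_one_mul]
    exact habs.neg.continuousAt.congr hev
  · have h0 : Real.sign (0:ℝ) * |(0:ℝ)| ^ a = 0 := by simp
    have htends : Filter.Tendsto (fun x : ℝ => |x| ^ a) (nhds 0) (nhds 0) := by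
      have := habs.tendsto 0
      simpa [abs_zero, Real.zero_rpow ha.ne'] using this
    have hb : ∀ x : ℝ, ‖Real.sign x * |x| ^ a‖ ≤ |x| ^ a := by
      intro x
      have h1 : ‖Real.sign x * |x| ^ a‖ = |Real.sign x| * |x| ^ a := by
        rw [Real.norm_eq_abs, abs_mul, abs_of_nonneg (Real.rpow_nonneg (abs_nonneg x) a)]
      rw [h1]
      have h2 : |Real.sign x| ≤ 1 := by
        rcases lt_trichotomy x 0 with h | h | h
        · simp [Real.sign_of_neg h]
        · simp [h]
        · simp [Real.sign_of_pos h]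
      calc |Real.sign x| * |x| ^ a ≤ 1 * |x| ^ a :=
            mul_le_mul_of_nonneg_right h2 (Real.rpow_nonneg (abs_nonneg x) a)
        _ = |x| ^ a := one_mul _
    have : Filter.Tendsto (fun x : ℝ => Real.sign x * |x| ^ a) (nhds 0) (nhds 0) :=
      squeeze_zero_norm hb htends
    rw [ContinuousAt, hs, h0]
    exact this
  · have hev : ∀ᶠ x in nhds s, |x| ^ a = Real.sign x * |x| ^ a := by
      filter_upwards [lt_mem_nhds hs] with x hx
      rw [Real.sign_of_pos hx, one_mul]
    exact habs.continuousAt.congr hev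

private lemma phi_strictMono {a : ℝ} (ha : 0 < a) :
    StrictMono fun s : ℝ => Real.sign s * |s| ^ a := by
  have hpos : ∀ x : ℝ, 0 < x → Real.sign x * |x| ^ a = x ^ a := fun x hx => by
    rw [Real.sign_of_pos hx, abs_of_pos hx, one_mul]
  have hneg : ∀ x : ℝ, x < 0 → Real.sign x * |x| ^ a = -((-x) ^ a) := fun x hx => by
    rw [Real.sign_of_neg hx, abs_of_neg hx, neg_one_mul]
  intro s u hsu
  simp only
  rcases lt_trichotomy s 0 with hs | hs | hs
  · rcases lt_trichotomy u 0 with hu | hu | hu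
    · rw [hneg s hs, hneg u hu]
      have : (-u) ^ a < (-s) ^ a :=
        Real.rpow_lt_rpow (by linarith) (by linarith) ha
      linarith
    · have h1 : (0:ℝ) < (-s) ^ a := Real.rpow_pos_of_pos (by linarith) a
      rw [hneg s hs, hu]
      simp only [Real.sign_zero, zero_mul]
      linarith
    · have h1 : (0:ℝ) < (-s) ^ a := Real.rpow_pos_of_pos (by linarith) a
      have h2 : (0:ℝ) < u ^ a := Real.rpow_pos_of_pos hu a
      rw [hneg s hs, hpos u hu]
      linarith
  · have hu : 0 < u := hs ▸ hsu
    have h2 : (0:ℝ) < u ^ a := Real.rpow_pos_of_pos hu a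
    rw [hs, hpos u hu]
    simp only [Real.sign_zero, zero_mul]
    linarith
  · have hu : 0 < u := hs.trans hsu
    rw [hpos s hs, hpos u hu]
    exact Real.rpow_lt_rpow hs.le hsu ha

/-- The boundary-value map `M_p(t) = ∫_{R₂}^{R₁} sgn(F(ρ,t))|F(ρ,t)ρ|^{1/(p-1)} dρ`,
where `F(ρ,t) = (tR₂ⁿ - ∫_{R₂}^ρ f⁺ r^{n-1} dr)/ρⁿ`, is continuous and strictly
increasing in `t` (Second Part of the proof of Lemma 2.7). -/
theorem Mp_continuous_strictMono (n : ℕ) (hn : 1 ≤ n) (R₂ R₁ : ℝ)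
    (hR₂ : 0 < R₂) (hR : R₂ < R₁) (p : ℝ) (hp : 2 < p)
    (f : ℝ → ℝ) (hf : ContinuousOn f (Set.Icc R₂ R₁))
    (hfpos : ∀ r ∈ Set.Icc R₂ R₁, 0 < f r)
    (F : ℝ → ℝ → ℝ)
    (hF : ∀ ρ t, F ρ t = (t * R₂ ^ n - ∫ r in R₂..ρ, f r * r ^ (n - 1)) / ρ ^ n)
    (M : ℝ → ℝ)
    (hM : ∀ t, M t = ∫ ρ in R₂..R₁,
      Real.sign (F ρ t) * |F ρ t * ρ| ^ (1 / (p - 1))) :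
    Continuous M ∧ StrictMono M := by
  have hq0 : 0 < 1 / (p - 1) := div_pos one_pos (by linarith)
  set q : ℝ := 1 / (p - 1) with hqdef
  set φ : ℝ → ℝ := fun s => Real.sign s * |s| ^ q with hφ
  have φc : Continuous φ := phi_continuous hq0
  have φm : StrictMono φ := phi_strictMono hq0
  set G : ℝ → ℝ := fun ρ => ∫ r in R₂..ρ, f r * r ^ (n - 1) with hGdef
  have hIcc : Set.uIcc R₂ R₁ = Set.Icc R₂ R₁ := Set.uIcc_of_le hR.le
  have hfint : IntervalIntegrable (fun r => f r * r ^ (n - 1))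
      MeasureTheory.volume R₂ R₁ := by
    apply ContinuousOn.intervalIntegrable
    rw [hIcc]
    exact hf.mul (continuous_pow _).continuousOn
  have hGcont : ContinuousOn G (Set.Icc R₂ R₁) := by
    rw [← hIcc]
    exact intervalIntegral.continuousOn_primitive_interval' hfint
      (by rw [hIcc]; exact Set.left_mem_Icc.2 hR.le)
  have hsgn : ∀ s ρ : ℝ, 0 < ρ → Real.sign s = Real.sign (s * ρ) := by
    intro s ρ hρ
    rcases lt_trichotomy s 0 with h | h | h
    · rw [Real.sign_of_neg h, Real.sign_of_neg (mul_neg_of_neg_of_pos h hρ)]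
    · simp [h]
    · rw [Real.sign_of_pos h, Real.sign_of_pos (mul_pos h hρ)]
  have key : ∀ t ρ, ρ ∈ Set.Icc R₂ R₁ →
      Real.sign (F ρ t) * |F ρ t * ρ| ^ q
        = φ ((t * R₂ ^ n - G ρ) / ρ ^ n * ρ) := by
    intro t ρ hρ
    have hρ0 : 0 < ρ := lt_of_lt_of_le hR₂ hρ.1
    rw [hF ρ t, hsgn _ ρ hρ0]
  -- continuity
  set c : ℝ → ℝ := fun ρ => max R₂ (min ρ R₁) with hcdef
  have hc : Continuous c := continuous_const.max (continuous_id.min continuous_const)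
  have hcmem : ∀ ρ : ℝ, c ρ ∈ Set.Icc R₂ R₁ :=
    fun ρ => ⟨le_max_left _ _, max_le hR.le (min_le_right _ _)⟩
  have hceq : ∀ ρ ∈ Set.Icc R₂ R₁, c ρ = ρ := by
    intro ρ hρ
    rw [hcdef]
    simp only
    rw [min_eq_left hρ.2, max_eq_right hρ.1]
  have hKcont : Continuous (Function.uncurry fun t ρ : ℝ =>
      φ ((t * R₂ ^ n - G (c ρ)) / (c ρ) ^ n * c ρ)) := by
    show Continuous fun pr : ℝ × ℝ =>
      φ ((pr.1 * R₂ ^ n - G (c pr.2)) / (c pr.2) ^ n * c pr.2)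
    apply φc.comp
    have hGc : Continuous fun pr : ℝ × ℝ => G (c pr.2) :=
      hGcont.comp_continuous (hc.comp continuous_snd) fun pr => hcmem pr.2
    have hcne : ∀ pr : ℝ × ℝ, (c pr.2) ^ n ≠ 0 := fun pr =>
      pow_ne_zero _ (ne_of_gt (lt_of_lt_of_le hR₂ (hcmem pr.2).1))
    exact (((continuous_fst.mul continuous_const).sub hGc).div
      ((hc.comp continuous_snd).pow n) hcne).mul (hc.comp continuous_snd)
  have hMcont : Continuous M := by
    have hMeq : M = fun t => ∫ ρ in R₂..R₁,
        φ ((t * R₂ ^ n - G (c ρ)) / (c ρ) ^ n * c ρ) := by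
      funext t
      rw [hM]
      apply intervalIntegral.integral_congr
      intro ρ hρ
      rw [hIcc] at hρ
      dsimp only
      rw [key t ρ hρ, hceq ρ hρ]
    rw [hMeq]
    exact intervalIntegral.continuous_parametric_intervalIntegral_of_continuous'
      hKcont R₂ R₁
  -- strict monotonicity
  have hne : ∀ ρ ∈ Set.Icc R₂ R₁, ρ ^ n ≠ 0 := fun ρ hρ =>
    pow_ne_zero _ (ne_of_gt (lt_of_lt_of_le hR₂ hρ.1))
  have hHcont : ∀ t, ContinuousOn
      (fun ρ => φ ((t * R₂ ^ n - G ρ) / ρ ^ n * ρ)) (Set.Icc R₂ R₁) := by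
    intro t
    apply φc.comp_continuousOn
    exact ((continuousOn_const.sub hGcont).div
      (continuous_pow n).continuousOn hne).mul continuousOn_id
  have hint : ∀ t, IntervalIntegrable
      (fun ρ => φ ((t * R₂ ^ n - G ρ) / ρ ^ n * ρ)) MeasureTheory.volume R₂ R₁ := by
    intro t
    apply ContinuousOn.intervalIntegrable
    rw [hIcc]
    exact hHcont t
  have hM2 : ∀ t, M t = ∫ ρ in R₂..R₁, φ ((t * R₂ ^ n - G ρ) / ρ ^ n * ρ) := by
    intro t
    rw [hM]
    apply intervalIntegral.integral_congr
    intro ρ hρ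
    rw [hIcc] at hρ
    dsimp only
    exact key t ρ hρ
  refine ⟨hMcont, ?_⟩
  intro t₁ t₂ ht
  rw [hM2 t₁, hM2 t₂, ← sub_pos,
    ← intervalIntegral.integral_sub (hint t₂) (hint t₁)]
  apply intervalIntegral.intervalIntegral_pos_of_pos_on ((hint t₂).sub (hint t₁)) _ hR
  intro ρ hρ
  have hρIcc : ρ ∈ Set.Icc R₂ R₁ := ⟨hρ.1.le, hρ.2.le⟩
  have hρ0 : 0 < ρ := lt_of_lt_of_le hR₂ hρIcc.1
  have hρn : (0:ℝ) < ρ ^ n := pow_pos hρ0 n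
  have h1 : t₁ * R₂ ^ n - G ρ < t₂ * R₂ ^ n - G ρ := by
    have := mul_lt_mul_of_pos_right ht (pow_pos hR₂ n)
    linarith
  have hlt : (t₁ * R₂ ^ n - G ρ) / ρ ^ n * ρ < (t₂ * R₂ ^ n - G ρ) / ρ ^ n * ρ :=
    mul_lt_mul_of_pos_right ((div_lt_div_iff_of_pos_right hρn).2 h1) hρ0
  exact sub_pos.2 (φm hlt)
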